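/- Thresholding-induced penalty concavity: for any thresholding function Θ (odd, nondecreasing, unbounded, with 0 ≤ Θ(t;λ) ≤ t for t ≥ 0), the induced penalty P_Θ(t;λ) = ∫_0^{|t|} (Θ^{-1}(u;λ) − u) du satisfies: L_Θ := 1 − ess inf{ dΘ^{-1}(u;λ)/du : u ≥ 0 } equals the smallest constant L such that Δ_{P_Θ} + L·D_2 ≥ 0 (pointwise nonnegativity of the GBF of P_Θ plus L times the quadratic Bregman), i.e., L_Θ = inf{L ∈ ℝ : Δ_{P_Θ}(β,γ) + L(β−γ)²/2 ≥ 0 for all β,γ ∈ ℝ}. -/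

import Mathlib

open Filter Topology Set MeasureTheory

noncomputable section

def HasDirDeriv {E : Type*} [AddCommGroup E] [Module ℝ E] (ψ : E → ℝ) (β h : E) (d : ℝ) : Prop :=
  Tendsto (fun ε : ℝ => (ψ (β + ε • h) - ψ β) / ε) (𝓝[>] (0:ℝ)) (𝓝 d)

section ThreshAuxSec
open intervalIntegral
namespace ThreshAux



def rl (f : ℝ → ℝ) (x : ℝ) : ℝ := sInf (f '' Ioi x)
def ll (f : ℝ → ℝ) (x : ℝ) : ℝ := sSup (f '' Iio x)

lemma tendsto_rl {f : ℝ → ℝ} (hf : Monotone f) (x : ℝ) :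
    Tendsto f (𝓝[>] x) (𝓝 (rl f x)) := hf.tendsto_nhdsGT x

lemma tendsto_ll {f : ℝ → ℝ} (hf : Monotone f) (x : ℝ) :
    Tendsto f (𝓝[<] x) (𝓝 (ll f x)) := hf.tendsto_nhdsLT x

lemma rl_le {f : ℝ → ℝ} (hf : Monotone f) {x u : ℝ} (h : x < u) : rl f x ≤ f u :=
  csInf_le (hf.map_bddBelow bddBelow_Ioi) ⟨u, h, rfl⟩

lemma le_rl {f : ℝ → ℝ} (hf : Monotone f) (x : ℝ) : f x ≤ rl f x :=
  le_csInf (⟨f (x+1), x+1, by simp, rfl⟩) (by rintro b ⟨u, hu, rfl⟩; exact hf (le_of_lt hu))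

lemma le_ll {f : ℝ → ℝ} (hf : Monotone f) {x u : ℝ} (h : u < x) : f u ≤ ll f x :=
  le_csSup (hf.map_bddAbove bddAbove_Iio) ⟨u, h, rfl⟩

lemma ll_le {f : ℝ → ℝ} (hf : Monotone f) (x : ℝ) : ll f x ≤ f x :=
  csSup_le (⟨f (x-1), x-1, by simp, rfl⟩) (by rintro b ⟨u, hu, rfl⟩; exact hf (le_of_lt hu))

lemma tendsto_id_right (x : ℝ) : Tendsto (fun a : ℝ => a) (𝓝[>] x) (𝓝 x) :=
  tendsto_id.mono_left nhdsWithin_le_nhds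

lemma tendsto_id_left (x : ℝ) : Tendsto (fun a : ℝ => a) (𝓝[<] x) (𝓝 x) :=
  tendsto_id.mono_left nhdsWithin_le_nhds

/-- slope lower bound extends to right limits -/
lemma slope_rl {f : ℝ → ℝ} (hf : Monotone f) {c : ℝ}
    (hLB : ∀ a b : ℝ, 0 < a → a < b → c * (b - a) ≤ f b - f a)
    {x u : ℝ} (hx : 0 ≤ x) (hu : x < u) : c * (u - x) ≤ f u - rl f x := by
  have h1 : Tendsto (fun a : ℝ => f u - f a - c * (u - a)) (𝓝[>] x)
      (𝓝 (f u - rl f x - c * (u - x))) :=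
    ((tendsto_const_nhds.sub (tendsto_rl hf x)).sub
      (tendsto_const_nhds.mul (tendsto_const_nhds.sub (tendsto_id_right x))))
  have h2 : ∀ᶠ a in 𝓝[>] x, 0 ≤ f u - f a - c * (u - a) := by
    filter_upwards [Ioo_mem_nhdsGT_of_mem (Set.left_mem_Ico.2 hu)] with a ha
    have := hLB a u (lt_of_le_of_lt hx ha.1) ha.2
    linarith
  have := ge_of_tendsto h1 h2
  linarith

/-- slope lower bound extends to left limits -/
lemma slope_ll {f : ℝ → ℝ} (hf : Monotone f) {c : ℝ}
    (hLB : ∀ a b : ℝ, 0 < a → a < b → c * (b - a) ≤ f b - f a)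
    {x u : ℝ} (hu : 0 < u) (hux : u < x) : c * (x - u) ≤ ll f x - f u := by
  have h1 : Tendsto (fun b : ℝ => f b - f u - c * (b - u)) (𝓝[<] x)
      (𝓝 (ll f x - f u - c * (x - u))) :=
    (((tendsto_ll hf x).sub tendsto_const_nhds).sub
      (tendsto_const_nhds.mul ((tendsto_id_left x).sub tendsto_const_nhds)))
  have h2 : ∀ᶠ b in 𝓝[<] x, 0 ≤ f b - f u - c * (b - u) := by
    filter_upwards [Ioo_mem_nhdsLT_of_mem (Set.right_mem_Ioc.2 hux)] with b hb
    have := hLB u b hu hb.1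
    linarith
  have := ge_of_tendsto h1 h2
  linarith

/-- pointwise lower bound from slope bound near 0 -/
lemma pt_lower {f : ℝ → ℝ} {c : ℝ}
    (hLB : ∀ a b : ℝ, 0 < a → a < b → c * (b - a) ≤ f b - f a)
    (hfpos : ∀ u : ℝ, 0 < u → u ≤ f u)
    {u : ℝ} (hu : 0 < u) : c * u ≤ f u := by
  have h1 : Tendsto (fun a : ℝ => f u - a - c * (u - a)) (𝓝[>] (0:ℝ))
      (𝓝 (f u - 0 - c * (u - 0))) :=
    ((tendsto_const_nhds.sub (tendsto_id_right 0)).sub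
      (tendsto_const_nhds.mul (tendsto_const_nhds.sub (tendsto_id_right 0))))
  have h2 : ∀ᶠ a in 𝓝[>] (0:ℝ), 0 ≤ f u - a - c * (u - a) := by
    filter_upwards [Ioo_mem_nhdsGT_of_mem (Set.left_mem_Ico.2 hu)] with a ha
    have := hLB a u ha.1 ha.2
    have := hfpos a ha.1
    linarith
  have := ge_of_tendsto h1 h2
  linarith

lemma rl_lower {f : ℝ → ℝ} (hf : Monotone f) {c : ℝ}
    (hpt : ∀ u : ℝ, 0 < u → c * u ≤ f u) {x : ℝ} (hx : 0 ≤ x) : c * x ≤ rl f x := by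
  have h1 : Tendsto (fun a : ℝ => f a - c * a) (𝓝[>] x) (𝓝 (rl f x - c * x)) :=
    (tendsto_rl hf x).sub (tendsto_const_nhds.mul (tendsto_id_right x))
  have h2 : ∀ᶠ a in 𝓝[>] x, 0 ≤ f a - c * a := by
    filter_upwards [self_mem_nhdsWithin] with a ha
    have := hpt a (lt_of_le_of_lt hx ha)
    linarith
  have := ge_of_tendsto h1 h2
  linarith

lemma ll_lower {f : ℝ → ℝ} (hf : Monotone f) {c : ℝ}
    (hpt : ∀ u : ℝ, 0 < u → c * u ≤ f u) {x : ℝ} (hx : 0 < x) : c * x ≤ ll f x := by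
  have h1 : Tendsto (fun a : ℝ => f a - c * a) (𝓝[<] x) (𝓝 (ll f x - c * x)) :=
    (tendsto_ll hf x).sub (tendsto_const_nhds.mul (tendsto_id_left x))
  have h2 : ∀ᶠ a in 𝓝[<] x, 0 ≤ f a - c * a := by
    filter_upwards [Ioo_mem_nhdsLT_of_mem (Set.right_mem_Ioc.2 hx)] with a ha
    have := hpt a ha.1
    linarith
  have := ge_of_tendsto h1 h2
  linarith



lemma g_intble {f : ℝ → ℝ} (hf : Monotone f) (a b : ℝ) :
    IntervalIntegrable (fun u => f u - u) volume a b :=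
  (hf.intervalIntegrable).sub (continuous_id.intervalIntegrable a b)

lemma intint_mono {F G : ℝ → ℝ} {x y : ℝ} (hxy : x ≤ y)
    (hF : IntervalIntegrable F volume x y) (hG : IntervalIntegrable G volume x y)
    (h : ∀ u ∈ Ioo x y, F u ≤ G u) :
    ∫ u in x..y, F u ≤ ∫ u in x..y, G u := by
  rw [intervalIntegral.integral_of_le hxy, intervalIntegral.integral_of_le hxy,
    integral_Ioc_eq_integral_Ioo, integral_Ioc_eq_integral_Ioo]
  exact setIntegral_mono_on (hF.1.mono_set Ioo_subset_Ioc_self)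
    (hG.1.mono_set Ioo_subset_Ioc_self) measurableSet_Ioo h

lemma lin_integral (x y A c : ℝ) :
    ∫ u in x..y, (A + c * u) = (y - x) * A + c * (y^2 - x^2) / 2 := by
  have h1 : IntervalIntegrable (fun _ : ℝ => A) volume x y :=
    intervalIntegrable_const
  have h2 : IntervalIntegrable (fun u : ℝ => c * u) volume x y :=
    (continuous_const.mul continuous_id).intervalIntegrable x y
  rw [intervalIntegral.integral_add h1 h2, intervalIntegral.integral_const,
    intervalIntegral.integral_const_mul, integral_id]
  simp only [smul_eq_mul]
  ring

lemma lin_integral_left (x y K c : ℝ) :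
    ∫ u in x..y, (K + c * (u - x)) = (y - x) * K + c * (y - x)^2 / 2 := by
  have h : (fun u : ℝ => K + c * (u - x)) = fun u : ℝ => (K - c * x) + c * u := by
    funext u; ring
  rw [h, lin_integral]
  ring

lemma lin_integral_right (x y K c : ℝ) :
    ∫ u in x..y, (K + c * (u - y)) = (y - x) * K - c * (y - x)^2 / 2 := by
  have h : (fun u : ℝ => K + c * (u - y)) = fun u : ℝ => (K - c * y) + c * u := by
    funext u; ring
  rw [h, lin_integral]
  ring

lemma integral_ge {f : ℝ → ℝ} (hf : Monotone f) {x y K c : ℝ} (hxy : x ≤ y)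
    (hbd : ∀ u ∈ Ioo x y, K + c * (u - x) ≤ f u - u) :
    (y - x) * K + c * (y - x)^2 / 2 ≤ ∫ u in x..y, (f u - u) := by
  rw [← lin_integral_left x y K c]
  exact intint_mono hxy ((continuous_const.add
    (continuous_const.mul (continuous_id.sub continuous_const))).intervalIntegrable x y)
    (g_intble hf x y) hbd

lemma integral_le {f : ℝ → ℝ} (hf : Monotone f) {x y K c : ℝ} (hxy : x ≤ y)
    (hbd : ∀ u ∈ Ioo x y, f u - u ≤ K + c * (u - y)) :
    (∫ u in x..y, (f u - u)) ≤ (y - x) * K - c * (y - x)^2 / 2 := by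
  rw [← lin_integral_right x y K c]
  exact intint_mono hxy (g_intble hf x y) ((continuous_const.add
    (continuous_const.mul (continuous_id.sub continuous_const))).intervalIntegrable x y) hbd




section
variable {f P : ℝ → ℝ} (hf : Monotone f)
  (hPf : ∀ t : ℝ, P t = ∫ u in (0:ℝ)..|t|, (f u - u))

include hf hPf

lemma Pdiff {s t : ℝ} (hs : 0 ≤ s) (ht : 0 ≤ t) :
    P t - P s = ∫ u in s..t, (f u - u) := by
  have hg : ∀ a b : ℝ, IntervalIntegrable (fun u => f u - u) volume a b := fun a b =>
    (hf.intervalIntegrable).sub (continuous_id.intervalIntegrable a b)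
  rw [hPf t, hPf s, abs_of_nonneg hs, abs_of_nonneg ht]
  exact integral_interval_sub_left (hg 0 t) (hg 0 s)

lemma dirderiv_pos {γ h : ℝ} (hγ : 0 < γ) (hh : 0 < h) :
    HasDirDeriv P γ h (h * (rl f γ - γ)) := by
  have hmap : Tendsto (fun ε : ℝ => γ + ε * h) (𝓝[>] 0) (𝓝[>] γ) := by
    rw [tendsto_nhdsWithin_iff]
    constructor
    · have : Tendsto (fun ε : ℝ => γ + ε * h) (𝓝 0) (𝓝 (γ + 0 * h)) :=
        tendsto_const_nhds.add ((continuous_id.tendsto 0).mul tendsto_const_nhds)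
      simpa using this.mono_left nhdsWithin_le_nhds
    · filter_upwards [self_mem_nhdsWithin] with ε (hε : 0 < ε)
      exact Set.mem_Ioi.2 (by nlinarith)
  have hrt : Tendsto f (𝓝[>] γ) (𝓝 (rl f γ)) := hf.tendsto_nhdsGT γ
  unfold HasDirDeriv
  simp only [smul_eq_mul]
  have hlo : Tendsto (fun ε : ℝ => h * (rl f γ - γ - ε * h)) (𝓝[>] (0:ℝ))
      (𝓝 (h * (rl f γ - γ))) := by
    have : Tendsto (fun ε : ℝ => h * (rl f γ - γ - ε * h)) (𝓝[>] (0:ℝ))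
        (𝓝 (h * (rl f γ - γ - 0 * h))) :=
      (tendsto_const_nhds.mul ((tendsto_const_nhds.sub
        (((continuous_id.tendsto 0).mono_left nhdsWithin_le_nhds).mul tendsto_const_nhds))))
    simpa using this
  have hhi : Tendsto (fun ε : ℝ => h * (f (γ + ε * h) - γ)) (𝓝[>] (0:ℝ))
      (𝓝 (h * (rl f γ - γ))) :=
    tendsto_const_nhds.mul ((hrt.comp hmap).sub tendsto_const_nhds)
  refine tendsto_of_tendsto_of_tendsto_of_le_of_le' hlo hhi ?_ ?_
  · filter_upwards [self_mem_nhdsWithin] with ε (hε : 0 < ε)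
    have hq : P (γ + ε * h) - P γ = ∫ u in γ..(γ + ε * h), (f u - u) :=
      Pdiff hf hPf hγ.le (by nlinarith)
    have hlow : ((γ + ε * h) - γ) * (rl f γ - (γ + ε * h)) + 0 * ((γ + ε*h) - γ)^2/2
        ≤ ∫ u in γ..(γ + ε * h), (f u - u) := by
      apply integral_ge hf (by nlinarith)
      intro u hu
      have h1 : rl f γ ≤ f u := rl_le hf hu.1
      have h2 : u ≤ γ + ε * h := hu.2.le
      simp only [zero_mul]
      linarith
    rw [hq, le_div_iff₀ hε]
    nlinarith [hlow]
  · filter_upwards [self_mem_nhdsWithin] with ε (hε : 0 < ε)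
    have hq : P (γ + ε * h) - P γ = ∫ u in γ..(γ + ε * h), (f u - u) :=
      Pdiff hf hPf hγ.le (by nlinarith)
    have hup : (∫ u in γ..(γ + ε * h), (f u - u))
        ≤ ((γ + ε * h) - γ) * (f (γ + ε * h) - γ) - 0 * ((γ + ε*h) - γ)^2/2 := by
      apply integral_le hf (by nlinarith)
      intro u hu
      have h1 : f u ≤ f (γ + ε * h) := hf hu.2.le
      have h2 : γ ≤ u := hu.1.le
      simp only [zero_mul]
      linarith
    rw [hq, div_le_iff₀ hε]
    nlinarith [hup]


lemma dirderiv_neg {γ h : ℝ} (hγ : 0 < γ) (hh : h < 0) :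
    HasDirDeriv P γ h (h * (ll f γ - γ)) := by
  have hmap : Tendsto (fun ε : ℝ => γ + ε * h) (𝓝[>] 0) (𝓝[<] γ) := by
    rw [tendsto_nhdsWithin_iff]
    constructor
    · have : Tendsto (fun ε : ℝ => γ + ε * h) (𝓝 0) (𝓝 (γ + 0 * h)) :=
        tendsto_const_nhds.add ((continuous_id.tendsto 0).mul tendsto_const_nhds)
      simpa using this.mono_left nhdsWithin_le_nhds
    · filter_upwards [self_mem_nhdsWithin] with ε (hε : 0 < ε)
      exact Set.mem_Iio.2 (by nlinarith)
  have hlt : Tendsto f (𝓝[<] γ) (𝓝 (ll f γ)) := hf.tendsto_nhdsLT γ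
  unfold HasDirDeriv
  simp only [smul_eq_mul]
  have hlo : Tendsto (fun ε : ℝ => h * (ll f γ - γ - ε * h)) (𝓝[>] (0:ℝ))
      (𝓝 (h * (ll f γ - γ))) := by
    have : Tendsto (fun ε : ℝ => h * (ll f γ - γ - ε * h)) (𝓝[>] (0:ℝ))
        (𝓝 (h * (ll f γ - γ - 0 * h))) :=
      (tendsto_const_nhds.mul ((tendsto_const_nhds.sub
        (((continuous_id.tendsto 0).mono_left nhdsWithin_le_nhds).mul tendsto_const_nhds))))
    simpa using this
  have hhi : Tendsto (fun ε : ℝ => h * (f (γ + ε * h) - γ)) (𝓝[>] (0:ℝ))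
      (𝓝 (h * (ll f γ - γ))) :=
    tendsto_const_nhds.mul ((hlt.comp hmap).sub tendsto_const_nhds)
  have hev : Ioo (0:ℝ) (γ / (-h)) ∈ 𝓝[>] (0:ℝ) :=
    Ioo_mem_nhdsGT_of_mem (Set.left_mem_Ico.2 (div_pos hγ (by linarith)))
  refine tendsto_of_tendsto_of_tendsto_of_le_of_le' hlo hhi ?_ ?_
  · filter_upwards [hev] with ε hε
    have hε0 : 0 < ε := hε.1
    have hpos : 0 < γ + ε * h := by
      have := (lt_div_iff₀ (by linarith : (0:ℝ) < -h)).1 hε.2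
      nlinarith
    have hq : P (γ + ε * h) - P γ = -∫ u in (γ + ε * h)..γ, (f u - u) := by
      rw [Pdiff hf hPf hγ.le hpos.le, intervalIntegral.integral_symm]
    have hup : (∫ u in (γ + ε * h)..γ, (f u - u))
        ≤ (γ - (γ + ε * h)) * (ll f γ - (γ + ε * h)) - 0 * (γ - (γ + ε*h))^2/2 := by
      apply integral_le hf (by nlinarith)
      intro u hu
      have h1 : f u ≤ ll f γ := le_ll hf hu.2
      have h2 : γ + ε * h ≤ u := hu.1.le
      simp only [zero_mul]
      linarith
    rw [hq, le_div_iff₀ hε0]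
    nlinarith [hup]
  · filter_upwards [hev] with ε hε
    have hε0 : 0 < ε := hε.1
    have hpos : 0 < γ + ε * h := by
      have := (lt_div_iff₀ (by linarith : (0:ℝ) < -h)).1 hε.2
      nlinarith
    have hq : P (γ + ε * h) - P γ = -∫ u in (γ + ε * h)..γ, (f u - u) := by
      rw [Pdiff hf hPf hγ.le hpos.le, intervalIntegral.integral_symm]
    have hlow : (γ - (γ + ε * h)) * (f (γ + ε * h) - γ) + 0 * (γ - (γ + ε*h))^2/2
        ≤ ∫ u in (γ + ε * h)..γ, (f u - u) := by
      apply integral_ge hf (by nlinarith)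
      intro u hu
      have h1 : f (γ + ε * h) ≤ f u := hf hu.1.le
      have h2 : u ≤ γ := hu.2.le
      simp only [zero_mul]
      linarith
    rw [hq, div_le_iff₀ hε0]
    nlinarith [hlow]

lemma dirderiv_at0 (h : ℝ) : HasDirDeriv P 0 h (|h| * rl f 0) := by
  rcases eq_or_ne h 0 with rfl | hne
  · unfold HasDirDeriv
    have hz : ∀ ε : ℝ, (P (0 + ε • (0:ℝ)) - P 0) / ε = 0 := by
      intro ε; simp
    simpa [hz] using (tendsto_const_nhds :
      Tendsto (fun _ : ℝ => (0:ℝ)) (𝓝[>] (0:ℝ)) (𝓝 0))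
  have habs : 0 < |h| := abs_pos.2 hne
  have hmap : Tendsto (fun ε : ℝ => ε * |h|) (𝓝[>] 0) (𝓝[>] (0:ℝ)) := by
    rw [tendsto_nhdsWithin_iff]
    constructor
    · have : Tendsto (fun ε : ℝ => ε * |h|) (𝓝 0) (𝓝 (0 * |h|)) :=
        (continuous_id.tendsto 0).mul tendsto_const_nhds
      simpa using this.mono_left nhdsWithin_le_nhds
    · filter_upwards [self_mem_nhdsWithin] with ε (hε : 0 < ε)
      exact Set.mem_Ioi.2 (by positivity)
  have hrt : Tendsto f (𝓝[>] (0:ℝ)) (𝓝 (rl f 0)) := hf.tendsto_nhdsGT 0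
  unfold HasDirDeriv
  simp only [smul_eq_mul]
  have hlo : Tendsto (fun ε : ℝ => |h| * (rl f 0 - ε * |h|)) (𝓝[>] (0:ℝ))
      (𝓝 (|h| * rl f 0)) := by
    have : Tendsto (fun ε : ℝ => |h| * (rl f 0 - ε * |h|)) (𝓝[>] (0:ℝ))
        (𝓝 (|h| * (rl f 0 - 0 * |h|))) :=
      (tendsto_const_nhds.mul ((tendsto_const_nhds.sub
        (((continuous_id.tendsto 0).mono_left nhdsWithin_le_nhds).mul tendsto_const_nhds))))
    simpa using this
  have hhi : Tendsto (fun ε : ℝ => |h| * f (ε * |h|)) (𝓝[>] (0:ℝ))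
      (𝓝 (|h| * rl f 0)) :=
    tendsto_const_nhds.mul (hrt.comp hmap)
  refine tendsto_of_tendsto_of_tendsto_of_le_of_le' hlo hhi ?_ ?_
  · filter_upwards [self_mem_nhdsWithin] with ε (hε : 0 < ε)
    have hq : P (0 + ε * h) - P 0 = ∫ u in (0:ℝ)..(ε * |h|), (f u - u) := by
      rw [hPf (0 + ε * h), hPf 0]
      simp [abs_mul, abs_of_pos hε]
    have hlow : ((ε * |h|) - 0) * (rl f 0 - ε * |h|) + 0 * ((ε * |h|) - 0)^2/2
        ≤ ∫ u in (0:ℝ)..(ε * |h|), (f u - u) := by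
      apply integral_ge hf (by positivity)
      intro u hu
      have h1 : rl f 0 ≤ f u := rl_le hf hu.1
      have h2 : u ≤ ε * |h| := hu.2.le
      simp only [zero_mul]
      linarith
    rw [hq, le_div_iff₀ hε]
    nlinarith [hlow]
  · filter_upwards [self_mem_nhdsWithin] with ε (hε : 0 < ε)
    have hq : P (0 + ε * h) - P 0 = ∫ u in (0:ℝ)..(ε * |h|), (f u - u) := by
      rw [hPf (0 + ε * h), hPf 0]
      simp [abs_mul, abs_of_pos hε]
    have hup : (∫ u in (0:ℝ)..(ε * |h|), (f u - u))
        ≤ ((ε * |h|) - 0) * (f (ε * |h|)) - 0 * ((ε * |h|) - 0)^2/2 := by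
      apply integral_le hf (by positivity)
      intro u hu
      have h1 : f u ≤ f (ε * |h|) := hf hu.2.le
      have h2 : 0 < u := hu.1
      simp only [zero_mul]
      linarith
    rw [hq, div_le_iff₀ hε]
    nlinarith [hup]

lemma dirderiv_dzero (γ : ℝ) : HasDirDeriv P γ 0 0 := by
  unfold HasDirDeriv
  have hz : ∀ ε : ℝ, (P (γ + ε • (0:ℝ)) - P γ) / ε = 0 := by intro ε; simp
  simpa [hz] using (tendsto_const_nhds :
    Tendsto (fun _ : ℝ => (0:ℝ)) (𝓝[>] (0:ℝ)) (𝓝 0))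

end



lemma mono_deriv_nonneg {f : ℝ → ℝ} (hf : Monotone f) (x : ℝ) : 0 ≤ deriv f x := by
  by_cases hd : DifferentiableAt ℝ f x
  · have H : Tendsto (slope f x) (𝓝[>] x) (𝓝 (deriv f x)) :=
      (hasDerivAt_iff_tendsto_slope.1 hd.hasDerivAt).mono_left
        (nhdsWithin_mono x fun u hu => ne_of_gt hu)
    apply ge_of_tendsto H
    filter_upwards [self_mem_nhdsWithin] with u (hu : x < u)
    rw [slope_def_field]
    exact div_nonneg (sub_nonneg.2 (hf hu.le)) (by linarith)
  · simp [deriv_zero_of_not_differentiableAt hd]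

lemma essinf_ge {f : ℝ → ℝ} (hf : Monotone f) {c : ℝ}
    (hLB : ∀ a b : ℝ, 0 < a → a < b → c * (b - a) ≤ f b - f a) :
    c ≤ essInf (deriv f) (volume.restrict (Ici (0:ℝ))) := by
  set μ := volume.restrict (Ici (0:ℝ)) with hμ
  have h0 : μ {(0:ℝ)} = 0 := by
    rw [hμ, Measure.restrict_apply (measurableSet_singleton 0)]
    exact measure_mono_null (inter_subset_left) Real.volume_singleton
  have hne : ∀ᵐ x ∂μ, x ≠ (0:ℝ) := by
    rw [ae_iff]
    convert h0 using 2
    simp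
  have hmem : ∀ᵐ x ∂μ, x ∈ Ici (0:ℝ) := ae_restrict_mem measurableSet_Ici
  have hdiff : ∀ᵐ x ∂μ, DifferentiableAt ℝ f x := ae_restrict_of_ae hf.ae_differentiableAt
  have key : ∀ᵐ x ∂μ, c ≤ deriv f x := by
    filter_upwards [hne, hmem, hdiff] with x hx1 hx2 hx3
    have hx : 0 < x := lt_of_le_of_ne hx2 (Ne.symm hx1)
    have H : Tendsto (slope f x) (𝓝[>] x) (𝓝 (deriv f x)) :=
      (hasDerivAt_iff_tendsto_slope.1 hx3.hasDerivAt).mono_left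
        (nhdsWithin_mono x fun u hu => ne_of_gt hu)
    apply ge_of_tendsto H
    filter_upwards [self_mem_nhdsWithin] with u (hu : x < u)
    rw [slope_def_field, le_div_iff₀ (by linarith)]
    have := hLB x u hx hu
    linarith
  have hcb : IsCoboundedUnder (· ≥ ·) (ae μ) (deriv f) := by
    obtain ⟨N, hN⟩ : ∃ N : ℕ, ¬ μ {x | deriv f x ≤ (N:ℝ)} = 0 := by
      by_contra hcon
      push_neg at hcon
      have h1 : μ (⋃ N : ℕ, {x : ℝ | deriv f x ≤ (N:ℝ)}) = 0 := measure_iUnion_null hcon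
      have huniv : (⋃ N : ℕ, {x : ℝ | deriv f x ≤ (N:ℝ)}) = univ := by
        ext x
        simp only [mem_iUnion, mem_setOf_eq, mem_univ, iff_true]
        exact exists_nat_ge (deriv f x)
      rw [huniv] at h1
      have h2 : μ univ = volume (Ici (0:ℝ)) := by rw [hμ, Measure.restrict_apply_univ]
      rw [h2, Real.volume_Ici] at h1
      exact (ENNReal.top_ne_zero) h1
    apply IsCoboundedUnder.of_frequently_le (a := (N:ℝ))
    by_contra h'
    rw [not_frequently] at h'
    have : μ {x | ¬ ¬ deriv f x ≤ (N:ℝ)} = 0 := (ae_iff).1 h'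
    simp only [not_not] at this
    exact hN this
  exact Filter.le_liminf_of_le hcb key

/-- Fatou step: positive-c slope bound from an a.e. derivative bound. -/
lemma fatou_step {f : ℝ → ℝ} (hf : Monotone f) {c a b0 b : ℝ} (hc0 : 0 < c)
    (ha : 0 < a) (hab0 : a < b0) (hb0b : b0 < b)
    (hae : ∀ᵐ x ∂(volume.restrict (Ioo a b0)), c ≤ deriv f x) :
    c * (b0 - a) ≤ f b - f a := by
  set μab := volume.restrict (Ioo a b0) with hμab
  have hdiffab : ∀ᵐ x ∂μab, HasDerivAt f (deriv f x) x :=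
    ae_restrict_of_ae (hf.ae_differentiableAt.mono fun x hx => hx.hasDerivAt)
  set δ : ℕ → ℝ := fun n => 1 / ((n : ℝ) + 1) with hδdef
  have hδpos : ∀ n : ℕ, 0 < δ n := fun n => by positivity
  set q : ℕ → ℝ → ℝ := fun n x => ((n : ℝ) + 1) * (f (x + δ n) - f x) with hqdef
  have hq0 : ∀ n x, 0 ≤ q n x := fun n x =>
    mul_nonneg (by positivity) (sub_nonneg.2 (hf (by linarith [hδpos n])))
  have hqt : ∀ x, HasDerivAt f (deriv f x) x →
      Tendsto (fun n => q n x) atTop (𝓝 (deriv f x)) := by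
    intro x hx
    have H := hasDerivAt_iff_tendsto_slope.1 hx
    have hseq : Tendsto (fun n : ℕ => x + δ n) atTop (𝓝[≠] x) := by
      rw [tendsto_nhdsWithin_iff]
      constructor
      · have : Tendsto (fun n : ℕ => x + δ n) atTop (𝓝 (x + 0)) :=
          tendsto_const_nhds.add tendsto_one_div_add_atTop_nhds_zero_nat
        simpa using this
      · exact Eventually.of_forall fun n => by
          simp only [mem_compl_iff, mem_singleton_iff]
          intro hcon
          have := hδpos n
          linarith
    have hcomp := H.comp hseq
    have heq : (slope f x ∘ fun n : ℕ => x + δ n) = fun n => q n x := by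
      funext n
      simp only [Function.comp_apply, slope_def_field, hqdef, hδdef]
      have h1 : x + 1 / ((n:ℝ) + 1) - x = 1 / ((n:ℝ) + 1) := by ring
      rw [h1, div_eq_iff (by positivity : (1:ℝ)/((n:ℝ)+1) ≠ 0)]
      have hne : ((n:ℝ)+1) ≠ 0 := by positivity
      field_simp
    rwa [heq] at hcomp
  have hmeasf : Measurable f := hf.measurable
  have hqm : ∀ n, Measurable fun x => ENNReal.ofReal (q n x) := fun n =>
    ((((hmeasf.comp (measurable_id.add_const (δ n))).sub hmeasf).const_mul _)).ennreal_ofReal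
  have hch1 : ENNReal.ofReal c * volume (Ioo a b0) ≤ ∫⁻ x, ENNReal.ofReal (deriv f x) ∂μab := by
    have h1 : ∫⁻ _x, ENNReal.ofReal c ∂μab = ENNReal.ofReal c * volume (Ioo a b0) := by
      rw [lintegral_const, hμab, Measure.restrict_apply_univ]
    rw [← h1]
    exact lintegral_mono_ae (hae.mono fun x hx => ENNReal.ofReal_le_ofReal hx)
  have hch2 : ∫⁻ x, ENNReal.ofReal (deriv f x) ∂μab ≤
      Filter.liminf (fun n => ∫⁻ x, ENNReal.ofReal (q n x) ∂μab) atTop := by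
    have hcongr : ∀ᵐ x ∂μab, ENNReal.ofReal (deriv f x) =
        Filter.liminf (fun n => ENNReal.ofReal (q n x)) atTop :=
      hdiffab.mono fun x hx => ((ENNReal.tendsto_ofReal (hqt x hx)).liminf_eq).symm
    calc ∫⁻ x, ENNReal.ofReal (deriv f x) ∂μab
        = ∫⁻ x, Filter.liminf (fun n => ENNReal.ofReal (q n x)) atTop ∂μab :=
          lintegral_congr_ae hcongr
      _ ≤ _ := lintegral_liminf_le hqm
  have hev : ∀ᶠ n : ℕ in atTop,
      (∫⁻ x, ENNReal.ofReal (q n x) ∂μab) ≤ ENNReal.ofReal (f b - f a) := by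
    have hδ0 : Tendsto δ atTop (𝓝 0) := tendsto_one_div_add_atTop_nhds_zero_nat
    filter_upwards [hδ0.eventually_le_const (by linarith : (0:ℝ) < b - b0)] with n hn
    have hδn := hδpos n
    have hm1 : Monotone fun x => f (x + δ n) := fun u v huv => hf (by linarith)
    have hint1 : IntegrableOn (fun x => q n x) (Ioo a b0) volume := by
      have i1 : IntegrableOn (fun x => f (x + δ n)) (Ioo a b0) volume :=
        ((hm1.intervalIntegrable).1.mono_set Ioo_subset_Ioc_self)
      have i2 : IntegrableOn f (Ioo a b0) volume :=
        ((hf.intervalIntegrable).1.mono_set Ioo_subset_Ioc_self)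
      exact (i1.sub i2).const_mul _
    rw [← ofReal_integral_eq_lintegral_ofReal hint1 (Eventually.of_forall fun x => hq0 n x)]
    apply ENNReal.ofReal_le_ofReal
    -- compute and bound the real integral
    have hii : ∀ (u v : ℝ), IntervalIntegrable f volume u v := fun u v =>
      hf.intervalIntegrable
    have hiim : ∀ (u v : ℝ), IntervalIntegrable (fun x => f (x + δ n)) volume u v := fun u v =>
      hm1.intervalIntegrable
    have hIoo : ∫ x in Ioo a b0, q n x
        = ((n:ℝ) + 1) * ((∫ u in b0..(b0 + δ n), f u) - ∫ u in a..(a + δ n), f u) := by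
      rw [← integral_Ioc_eq_integral_Ioo, ← intervalIntegral.integral_of_le hab0.le]
      rw [hqdef]
      simp only []
      rw [intervalIntegral.integral_const_mul]
      rw [intervalIntegral.integral_sub (hiim a b0) (hii a b0)]
      have hshift : (∫ x in a..b0, f (x + δ n)) = ∫ u in (a + δ n)..(b0 + δ n), f u :=
        intervalIntegral.integral_comp_add_right f (δ n)
      have e1 : (∫ u in a..(a + δ n), f u) + (∫ u in (a + δ n)..(b0 + δ n), f u)
          = ∫ u in a..(b0 + δ n), f u :=
        intervalIntegral.integral_add_adjacent_intervals (hii _ _) (hii _ _)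
      have e2 : (∫ u in a..b0, f u) + (∫ u in b0..(b0 + δ n), f u)
          = ∫ u in a..(b0 + δ n), f u :=
        intervalIntegral.integral_add_adjacent_intervals (hii _ _) (hii _ _)
      rw [hshift]
      linear_combination ((n:ℝ) + 1) * (e1 - e2)
    rw [hIoo]
    have hb1 : (∫ u in b0..(b0 + δ n), f u) ≤ δ n * f b := by
      have : (∫ u in b0..(b0 + δ n), f u) ≤ ∫ _u in b0..(b0 + δ n), f b := by
        apply intint_mono (by linarith) (hii _ _) intervalIntegrable_const
        intro u hu
        exact hf (by rcases hu with ⟨h1, h2⟩; linarith)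
      rwa [intervalIntegral.integral_const, smul_eq_mul, add_sub_cancel_left] at this
    have hb2 : δ n * f a ≤ ∫ u in a..(a + δ n), f u := by
      have : (∫ _u in a..(a + δ n), f a) ≤ ∫ u in a..(a + δ n), f u := by
        apply intint_mono (by linarith) intervalIntegrable_const (hii _ _)
        intro u hu
        exact hf (by rcases hu with ⟨h1, h2⟩; linarith)
      rwa [intervalIntegral.integral_const, smul_eq_mul, add_sub_cancel_left] at this
    have hδinv : ((n:ℝ) + 1) * δ n = 1 := by rw [hδdef]; field_simp
    calc ((n:ℝ) + 1) * ((∫ u in b0..(b0 + δ n), f u) - ∫ u in a..(a + δ n), f u)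
        ≤ ((n:ℝ) + 1) * (δ n * f b - δ n * f a) := by
          apply mul_le_mul_of_nonneg_left (by linarith) (by positivity)
      _ = f b - f a := by linear_combination (f b - f a) * hδinv
  have hliminf_le : Filter.liminf (fun n => ∫⁻ x, ENNReal.ofReal (q n x) ∂μab) atTop
      ≤ ENNReal.ofReal (f b - f a) := by
    calc Filter.liminf (fun n => ∫⁻ x, ENNReal.ofReal (q n x) ∂μab) atTop
        ≤ Filter.liminf (fun _n : ℕ => ENNReal.ofReal (f b - f a)) atTop :=
          Filter.liminf_le_liminf hev
      _ = ENNReal.ofReal (f b - f a) := Filter.liminf_const _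
  have hfinal : ENNReal.ofReal (c * (b0 - a)) ≤ ENNReal.ofReal (f b - f a) := by
    have h := le_trans hch1 (le_trans hch2 hliminf_le)
    rwa [Real.volume_Ioo, ← ENNReal.ofReal_mul hc0.le] at h
  have hnn : 0 ≤ f b - f a := sub_nonneg.2 (hf (by linarith))
  have := (ENNReal.ofReal_le_ofReal_iff hnn).1 hfinal
  linarith

lemma essinf_LB {f : ℝ → ℝ} (hf : Monotone f) (a b : ℝ) (ha : 0 < a) (hab : a < b) :
    (essInf (deriv f) (volume.restrict (Ici (0:ℝ)))) * (b - a) ≤ f b - f a := by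
  set m := essInf (deriv f) (volume.restrict (Ici (0:ℝ))) with hm
  have step : ∀ c, c < m → c * (b - a) ≤ f b - f a := by
    intro c hc
    rcases le_or_gt c 0 with hc0 | hc0
    · have h1 : 0 ≤ f b - f a := sub_nonneg.2 (hf hab.le)
      nlinarith
    have hbdd : IsBoundedUnder (· ≥ ·) (ae (volume.restrict (Ici (0:ℝ)))) (deriv f) :=
      Filter.isBoundedUnder_of ⟨0, fun x => mono_deriv_nonneg hf x⟩
    have hae : ∀ᵐ x ∂(volume.restrict (Ici (0:ℝ))), c < deriv f x :=
      Filter.eventually_lt_of_lt_liminf hc hbdd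
    have main : ∀ b0, a < b0 → b0 < b → c * (b0 - a) ≤ f b - f a := by
      intro b0 hab0 hb0b
      have hsub : Ioo a b0 ⊆ Ici (0:ℝ) := fun x hx => le_of_lt (ha.trans hx.1)
      have haeab : ∀ᵐ x ∂(volume.restrict (Ioo a b0)), c ≤ deriv f x :=
        (ae_restrict_of_ae_restrict_of_subset hsub hae).mono fun x hx => hx.le
      exact fatou_step hf hc0 ha hab0 hb0b haeab
    have h1 : Tendsto (fun b0 : ℝ => c * (b0 - a)) (𝓝[<] b) (𝓝 (c * (b - a))) :=
      tendsto_const_nhds.mul ((tendsto_id.mono_left nhdsWithin_le_nhds).sub tendsto_const_nhds)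
    apply le_of_tendsto h1
    filter_upwards [Ioo_mem_nhdsLT_of_mem (right_mem_Ioc.2 hab)] with b0 hb0
    exact main b0 hb0.1 hb0.2
  by_contra hcon
  push_neg at hcon
  have hba : 0 < b - a := by linarith
  have hc0m : (f b - f a) / (b - a) < m := by rw [div_lt_iff₀ hba]; linarith
  have h2 := step (((f b - f a) / (b - a) + m)/2) (by linarith)
  have h3 : (f b - f a) / (b - a) * (b - a) = f b - f a := by field_simp
  nlinarith

end ThreshAux
end ThreshAuxSec

/-- The concavity index L_Θ of a thresholding-induced penalty equals the smallest constant L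
making Δ_{P_Θ} + L·D₂ pointwise nonnegative. -/
theorem thresholding_penalty_concavity (Θ : ℝ → ℝ)
    (hodd : ∀ t, Θ (-t) = -Θ t) (hmono : Monotone Θ)
    (hlim : Tendsto Θ atTop atTop)
    (hbd : ∀ t : ℝ, 0 ≤ t → 0 ≤ Θ t ∧ Θ t ≤ t)
    (Θinv : ℝ → ℝ) (hΘinv : ∀ u : ℝ, 0 < u → Θinv u = sSup {t : ℝ | Θ t ≤ u})
    (P : ℝ → ℝ) (hP : ∀ t : ℝ, P t = ∫ u in (0:ℝ)..|t|, (Θinv u - u))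
    (δP : ℝ → ℝ → ℝ) (hδP : ∀ γ h : ℝ, HasDirDeriv P γ h (δP γ h)) :
    1 - essInf (deriv Θinv) (volume.restrict (Set.Ici (0:ℝ)))
      = sInf {L : ℝ | ∀ β γ : ℝ,
          0 ≤ (P β - P γ - δP γ (β - γ)) + L * (β - γ) ^ 2 / 2} := by
  classical
  set f : ℝ → ℝ := fun u => if 0 < u then Θinv u else 0 with hfdef
  have hbddA : ∀ v : ℝ, BddAbove {t : ℝ | Θ t ≤ v} := by
    intro v
    obtain ⟨T, hT⟩ := (hlim.eventually_ge_atTop (v + 1)).exists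
    refine ⟨T, fun t ht => ?_⟩
    by_contra hlt
    push_neg at hlt
    have h1 : Θ T ≤ Θ t := hmono hlt.le
    have h2 : Θ t ≤ v := ht
    linarith
  have hmemS : ∀ u : ℝ, 0 < u → u ∈ {t : ℝ | Θ t ≤ u} := fun u hu => (hbd u hu.le).2
  have hΘinv_ge : ∀ u : ℝ, 0 < u → u ≤ Θinv u := by
    intro u hu
    rw [hΘinv u hu]
    exact le_csSup (hbddA u) (hmemS u hu)
  have hΘinv_mono : ∀ u v : ℝ, 0 < u → u ≤ v → Θinv u ≤ Θinv v := by
    intro u v hu huv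
    rw [hΘinv u hu, hΘinv v (lt_of_lt_of_le hu huv)]
    exact csSup_le_csSup (hbddA v) ⟨u, hmemS u hu⟩ fun t ht => le_trans ht huv
  have hf : Monotone f := by
    intro u v huv
    by_cases hu : 0 < u
    · have hv : 0 < v := lt_of_lt_of_le hu huv
      simp only [hfdef, if_pos hu, if_pos hv]
      exact hΘinv_mono u v hu huv
    · simp only [hfdef, if_neg hu]
      by_cases hv : 0 < v
      · simp only [if_pos hv]
        linarith [hΘinv_ge v hv]
      · simp [if_neg hv]
  have hfpos : ∀ u : ℝ, 0 < u → u ≤ f u := by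
    intro u hu
    simp only [hfdef, if_pos hu]
    exact hΘinv_ge u hu
  have hPf : ∀ t : ℝ, P t = ∫ u in (0:ℝ)..|t|, (f u - u) := by
    intro t
    rw [hP t, intervalIntegral.integral_of_le (abs_nonneg t),
      intervalIntegral.integral_of_le (abs_nonneg t)]
    apply setIntegral_congr_fun measurableSet_Ioc
    intro u hu
    simp only [hfdef, if_pos hu.1]
  have hcongr : essInf (deriv Θinv) (volume.restrict (Set.Ici (0:ℝ)))
      = essInf (deriv f) (volume.restrict (Set.Ici (0:ℝ))) := by
    apply essInf_congr_ae
    have h0 : (volume.restrict (Set.Ici (0:ℝ))) {(0:ℝ)} = 0 := by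
      rw [Measure.restrict_apply (measurableSet_singleton 0)]
      exact measure_mono_null inter_subset_left Real.volume_singleton
    have hne : ∀ᵐ x ∂(volume.restrict (Set.Ici (0:ℝ))), x ≠ (0:ℝ) := by
      rw [ae_iff]
      convert h0 using 2
      simp
    have hmem' : ∀ᵐ x ∂(volume.restrict (Set.Ici (0:ℝ))), x ∈ Set.Ici (0:ℝ) :=
      ae_restrict_mem measurableSet_Ici
    filter_upwards [hne, hmem'] with x hx1 hx2
    have hx : 0 < x := lt_of_le_of_ne hx2 (Ne.symm hx1)
    have hev : Θinv =ᶠ[𝓝 x] f := by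
      filter_upwards [isOpen_Ioi.mem_nhds hx] with u (hu : 0 < u)
      simp [hfdef, if_pos hu]
    exact hev.deriv_eq
  set m := essInf (deriv f) (volume.restrict (Set.Ici (0:ℝ))) with hmdef
  have huniq : ∀ γ h d : ℝ, HasDirDeriv P γ h d → δP γ h = d := fun γ h d H =>
    tendsto_nhds_unique (hδP γ h) H
  have hPeven : ∀ t : ℝ, P (-t) = P t := by
    intro t
    rw [hP, hP, abs_neg]
  have hsymm : ∀ γ h : ℝ, δP (-γ) (-h) = δP γ h := by
    intro γ h
    apply huniq
    have H := hδP γ h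
    unfold HasDirDeriv at H ⊢
    have hrw : ∀ ε : ℝ, P (-γ + ε • (-h)) = P (γ + ε • h) := by
      intro ε
      have e : -γ + ε • (-h) = -(γ + ε • h) := by
        simp only [smul_eq_mul]
        ring
      rw [e, hPeven]
    simpa only [hrw, hPeven] using H
  have hδpos' : ∀ γ h : ℝ, 0 < γ → 0 < h → δP γ h = h * (ThreshAux.rl f γ - γ) :=
    fun γ h hγ hh => huniq _ _ _ (ThreshAux.dirderiv_pos hf hPf hγ hh)
  have hδneg' : ∀ γ h : ℝ, 0 < γ → h < 0 → δP γ h = h * (ThreshAux.ll f γ - γ) :=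
    fun γ h hγ hh => huniq _ _ _ (ThreshAux.dirderiv_neg hf hPf hγ hh)
  have hδat0 : ∀ h : ℝ, δP 0 h = |h| * ThreshAux.rl f 0 :=
    fun h => huniq _ _ _ (ThreshAux.dirderiv_at0 hf hPf h)
  have hδzero : ∀ γ : ℝ, δP γ 0 = 0 :=
    fun γ => huniq _ _ _ (ThreshAux.dirderiv_dzero hf hPf γ)
  have hLBm : ∀ a b : ℝ, 0 < a → a < b → m * (b - a) ≤ f b - f a :=
    fun a b ha hab => ThreshAux.essinf_LB hf a b ha hab
  have hpt : ∀ u : ℝ, 0 < u → m * u ≤ f u := fun u hu =>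
    ThreshAux.pt_lower hLBm hfpos hu
  have hset : {L : ℝ | ∀ β γ : ℝ,
      0 ≤ (P β - P γ - δP γ (β - γ)) + L * (β - γ) ^ 2 / 2} = Set.Ici (1 - m) := by
    apply Set.Subset.antisymm
    · intro L hL
      simp only [mem_setOf_eq] at hL
      simp only [mem_Ici]
      have hLB : ∀ a b : ℝ, 0 < a → a < b → (1 - L) * (b - a) ≤ f b - f a := by
        intro a b ha hab
        have h1 := hL b a
        have h2 := hL a b
        rw [hδpos' a (b - a) ha (by linarith)] at h1
        rw [hδneg' b (a - b) (by linarith) (by linarith)] at h2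
        have h3 : ThreshAux.ll f b ≤ f b := ThreshAux.ll_le hf b
        have h4 : f a ≤ ThreshAux.rl f a := ThreshAux.le_rl hf a
        nlinarith [h1, h2, h3, h4]
      have := ThreshAux.essinf_ge hf hLB
      linarith
    · intro L hL
      simp only [mem_Ici] at hL
      have key : ∀ β γ : ℝ, 0 ≤ γ →
          0 ≤ (P β - P γ - δP γ (β - γ)) + (1 - m) * (β - γ) ^ 2 / 2 := by
        intro β γ hγ0
        rcases eq_or_lt_of_le hγ0 with hγ | hγ
        · -- γ = 0
          have hγ' : γ = 0 := hγ.symm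
          subst hγ'
          have e0 : δP 0 (β - 0) = |β - 0| * ThreshAux.rl f 0 := hδat0 (β - 0)
          have hP0 : P 0 = 0 := by
            rw [hPf 0]
            simp
          have hint : (|β| - 0) * (ThreshAux.rl f 0) + (m - 1) * (|β| - 0) ^ 2 / 2
              ≤ ∫ u in (0:ℝ)..|β|, (f u - u) := by
            apply ThreshAux.integral_ge hf (abs_nonneg β)
            intro u hu
            have h1 : m * (u - 0) ≤ f u - ThreshAux.rl f 0 :=
              ThreshAux.slope_rl hf hLBm le_rfl hu.1
            linarith
          rw [hPf β, hP0, e0]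
          simp only [sub_zero] at hint ⊢
          have hsq : |β| ^ 2 = β ^ 2 := sq_abs β
          rw [hsq] at hint
          linarith [hint]
        · -- γ > 0
          have hll : (m - 1) * γ ≤ ThreshAux.ll f γ - γ := by
            have := ThreshAux.ll_lower hf hpt hγ
            linarith
          have hrl : (m - 1) * γ ≤ ThreshAux.rl f γ - γ := by
            have := ThreshAux.rl_lower hf hpt hγ.le
            linarith
          rcases lt_trichotomy β γ with hlt | heq | hgt
          · rcases le_or_gt 0 β with hβ0 | hβ0
            · -- 0 ≤ β < γ
              have e := hδneg' γ (β - γ) hγ (by linarith)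
              have hPd : P β - P γ = -(∫ u in β..γ, (f u - u)) := by
                rw [ThreshAux.Pdiff hf hPf hγ0 hβ0]
                exact intervalIntegral.integral_symm β γ
              have hup : (∫ u in β..γ, (f u - u))
                  ≤ (γ - β) * (ThreshAux.ll f γ - γ) - (m - 1) * (γ - β) ^ 2 / 2 := by
                apply ThreshAux.integral_le hf hlt.le
                intro u hu
                have h1 : m * (γ - u) ≤ ThreshAux.ll f γ - f u :=
                  ThreshAux.slope_ll hf hLBm (lt_of_le_of_lt hβ0 hu.1) hu.2
                linarith
              rw [e]
              nlinarith [hup, hPd]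
            · -- β < 0 < γ
              have e := hδneg' γ (β - γ) hγ (by linarith)
              have hPd : P β - P γ = ∫ u in γ..(-β), (f u - u) := by
                rw [← hPeven β]
                exact ThreshAux.Pdiff hf hPf hγ0 (by linarith)
              rcases le_or_gt (-β) γ with h3b | h3a
              · -- 0 < -β ≤ γ
                have hup : (∫ u in (-β)..γ, (f u - u))
                    ≤ (γ - (-β)) * (ThreshAux.ll f γ - γ) - (m - 1) * (γ - (-β)) ^ 2 / 2 := by
                  apply ThreshAux.integral_le hf h3b
                  intro u hu
                  have h1 : m * (γ - u) ≤ ThreshAux.ll f γ - f u :=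
                    ThreshAux.slope_ll hf hLBm (lt_trans (by linarith) hu.1) hu.2
                  linarith
                have hPd' : P β - P γ = -(∫ u in (-β)..γ, (f u - u)) := by
                  rw [hPd]
                  exact intervalIntegral.integral_symm (-β) γ
                rw [e]
                nlinarith [hup, hPd', mul_le_mul_of_nonneg_left hll
                  (by linarith : (0:ℝ) ≤ -2 * β)]
              · -- -β > γ
                have hlow : ((-β) - γ) * (ThreshAux.rl f γ - γ) + (m - 1) * ((-β) - γ) ^ 2 / 2
                    ≤ ∫ u in γ..(-β), (f u - u) := by
                  apply ThreshAux.integral_ge hf h3a.le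
                  intro u hu
                  have h1 : m * (u - γ) ≤ f u - ThreshAux.rl f γ :=
                    ThreshAux.slope_rl hf hLBm hγ0 hu.1
                  linarith
                rw [e]
                nlinarith [hlow, hPd,
                  mul_le_mul_of_nonneg_left hrl (by linarith : (0:ℝ) ≤ (-β) - γ),
                  mul_le_mul_of_nonneg_left hll (by linarith : (0:ℝ) ≤ γ - β)]
          · -- β = γ
            subst heq
            simp only [sub_self]
            rw [hδzero]
            simp
          · -- β > γ
            have e := hδpos' γ (β - γ) hγ (by linarith)
            have hPd : P β - P γ = ∫ u in γ..β, (f u - u) :=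
              ThreshAux.Pdiff hf hPf hγ0 (by linarith)
            have hlow : (β - γ) * (ThreshAux.rl f γ - γ) + (m - 1) * (β - γ) ^ 2 / 2
                ≤ ∫ u in γ..β, (f u - u) := by
              apply ThreshAux.integral_ge hf hgt.le
              intro u hu
              have h1 : m * (u - γ) ≤ f u - ThreshAux.rl f γ :=
                ThreshAux.slope_rl hf hLBm hγ0 hu.1
              linarith
            rw [e]
            nlinarith [hlow, hPd]
      intro β γ
      have hsq : (0:ℝ) ≤ (β - γ) ^ 2 := sq_nonneg _
      rcases le_or_gt 0 γ with hγ | hγ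
      · have := key β γ hγ
        nlinarith
      · have hk := key (-β) (-γ) (by linarith)
        have e1 : δP (-γ) (-β - -γ) = δP γ (β - γ) := by
          have : -β - -γ = -(β - γ) := by ring
          rw [this]
          exact hsymm γ (β - γ)
        rw [e1, hPeven, hPeven] at hk
        have e2 : (-β - -γ) ^ 2 = (β - γ) ^ 2 := by ring
        rw [e2] at hk
        nlinarith [hk]
  rw [hcongr, hset, csInf_Ici]
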